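/- Let L_b ≥ 1, let ψ be a nonzero state, let n ∈ ℤ, and suppose H1 ψ = √2·n·ψ. Then ψ is an eigenstate of U with eigenvalue (−1)^{L_b + n}: ψ(σ ∘ c) = (−1)^{L_b + n} · ψ(c) for every configuration c. -/

import Mathlib

open Finset

/-- The blocked three-letter alphabet `{O, L, R}`. -/
inductive Blk | O | L | R
deriving DecidableEq

/-- The involution of `{O, L, R}` exchanging `L` and `R` and fixing `O`. -/
def Blk.sigma : Blk → Blk
  | .O => .O
  | .L => .R
  | .R => .L

/-- The one-body Hamiltonian in the blocked basis. -/
noncomputable def H1 {N : ℕ} (ψ : (Fin N → Blk) → ℂ) (c : Fin N → Blk) : ℂ :=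
  ∑ j : Fin N,
    if c j = Blk.O then
      ψ (Function.update c j Blk.L) + ψ (Function.update c j Blk.R)
    else ψ (Function.update c j Blk.O)

instance : Fintype Blk := ⟨{.O, .L, .R}, fun x => by cases x <;> simp⟩

lemma Blk.sum_univ {M : Type*} [AddCommMonoid M] (f : Blk → M) :
    ∑ x : Blk, f x = f .O + f .L + f .R := by
  show ∑ x ∈ ({.O, .L, .R} : Finset Blk), f x = _
  rw [Finset.sum_insert (by decide), Finset.sum_insert (by decide),
    Finset.sum_singleton, add_assoc]

noncomputable def sq2 : ℂ := (Real.sqrt 2 : ℝ)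

lemma sq2_mul : sq2 * sq2 = 2 := by
  have : Real.sqrt 2 * Real.sqrt 2 = 2 := Real.mul_self_sqrt (by norm_num)
  simp only [sq2]
  norm_cast

noncomputable def wgt : Blk → Blk → ℂ
  | .O, .O => 0
  | .O, .L => 1
  | .O, .R => -1
  | .L, .O => sq2
  | .L, .L => 1
  | .L, .R => 1
  | .R, .O => -sq2
  | .R, .L => 1
  | .R, .R => 1

noncomputable def reci : Blk → ℂ
  | .O => 1/2
  | .L => 1/4
  | .R => 1/4

def nu : Blk → ℤ
  | .O => 0
  | .L => 1
  | .R => -1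

def zet : Blk → ℕ
  | .O => 1
  | _ => 0

lemma orth (x y : Blk) :
    ∑ t : Blk, reci t * (wgt t x * wgt t y) = if x = y then 1 else 0 := by
  have h2 := sq2_mul
  cases x <;> cases y <;>
    simp [Blk.sum_univ, reci, wgt] <;> ring_nf <;>
    rw [show sq2 ^ 2 = sq2 * sq2 from _root_.sq sq2, h2] <;> ring

lemma eig (t : Blk) (g : Blk → ℂ) :
    ∑ x : Blk, wgt t x * (if x = Blk.O then g Blk.L + g Blk.R else g Blk.O)
      = sq2 * (nu t : ℂ) * ∑ x : Blk, wgt t x * g x := by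
  have h2 := sq2_mul
  cases t <;> simp [Blk.sum_univ, wgt, nu] <;> ring_nf <;>
    rw [show sq2 ^ 2 = sq2 * sq2 from _root_.sq sq2, h2] <;> ring

lemma wgt_sigma (t x : Blk) :
    wgt t (Blk.sigma x) = (-1 : ℂ) ^ (zet t) * wgt t x := by
  cases t <;> cases x <;> simp [wgt, Blk.sigma, zet]

noncomputable def Ft {N : ℕ} (ψ : (Fin N → Blk) → ℂ) (τ : Fin N → Blk) : ℂ :=
  ∑ c : Fin N → Blk, (∏ j, wgt (τ j) (c j)) * ψ c

lemma Ft_sigma {N : ℕ} (ψ : (Fin N → Blk) → ℂ) (τ : Fin N → Blk) :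
    Ft (fun c => ψ (Blk.sigma ∘ c)) τ = (-1 : ℂ) ^ (∑ j, zet (τ j)) * Ft ψ τ := by
  have hinv : Function.Involutive (fun c : Fin N → Blk => Blk.sigma ∘ c) := by
    intro c; funext k; cases h : (c k) <;> simp [Blk.sigma, Function.comp, h]
  have step1 : Ft (fun c => ψ (Blk.sigma ∘ c)) τ
      = ∑ c : Fin N → Blk, (∏ j, wgt (τ j) (Blk.sigma (c j))) * ψ c := by
    unfold Ft
    refine (Fintype.sum_bijective _ hinv.bijective _ _ fun c => ?_).symm
    simp only [hinv c]
    rfl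
  rw [step1]
  unfold Ft
  rw [Finset.mul_sum]
  refine Finset.sum_congr rfl fun c _ => ?_
  have : ∏ j, wgt (τ j) (Blk.sigma (c j))
      = (∏ j, (-1 : ℂ) ^ (zet (τ j))) * ∏ j, wgt (τ j) (c j) := by
    rw [← Finset.prod_mul_distrib]
    exact Finset.prod_congr rfl fun j _ => wgt_sigma _ _
  rw [this, Finset.prod_pow_eq_pow_sum]
  ring

lemma prod_delta {N : ℕ} (c c' : Fin N → Blk) :
    ∏ j, (if c j = c' j then (1:ℂ) else 0) = if c = c' then 1 else 0 := by
  by_cases h : c = c'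
  · subst h; simp
  · rw [if_neg h]
    obtain ⟨j, hj⟩ := Function.ne_iff.mp h
    exact Finset.prod_eq_zero (Finset.mem_univ j) (if_neg hj)

lemma Ft_inv {N : ℕ} (ψ : (Fin N → Blk) → ℂ) (c : Fin N → Blk) :
    ∑ τ : Fin N → Blk, (∏ j, reci (τ j) * wgt (τ j) (c j)) * Ft ψ τ = ψ c := by
  unfold Ft
  have step1 : ∀ τ : Fin N → Blk,
      (∏ j, reci (τ j) * wgt (τ j) (c j)) *
        ∑ c' : Fin N → Blk, (∏ j, wgt (τ j) (c' j)) * ψ c'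
      = ∑ c' : Fin N → Blk,
          (∏ j, reci (τ j) * (wgt (τ j) (c j) * wgt (τ j) (c' j))) * ψ c' := by
    intro τ
    rw [Finset.mul_sum]
    refine Finset.sum_congr rfl fun c' _ => ?_
    rw [← mul_assoc, ← Finset.prod_mul_distrib]
    congr 1
    exact Finset.prod_congr rfl fun j _ => by ring
  simp only [step1]
  rw [Finset.sum_comm]
  have step2 : ∀ c' : Fin N → Blk,
      ∑ τ : Fin N → Blk, (∏ j, reci (τ j) * (wgt (τ j) (c j) * wgt (τ j) (c' j)))
        = if c = c' then 1 else 0 := by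
    intro c'
    rw [← Fintype.prod_sum (fun j t => reci t * (wgt t (c j) * wgt t (c' j)))]
    rw [← prod_delta c c']
    exact Finset.prod_congr rfl fun j _ => orth (c j) (c' j)
  calc ∑ c' : Fin N → Blk, ∑ τ : Fin N → Blk,
        (∏ j, reci (τ j) * (wgt (τ j) (c j) * wgt (τ j) (c' j))) * ψ c'
      = ∑ c' : Fin N → Blk, (if c = c' then 1 else 0) * ψ c' := by
        refine Finset.sum_congr rfl fun c' _ => ?_
        rw [← Finset.sum_mul, step2]
    _ = ψ c := by simp

lemma helper {β : Type*} [Fintype β] (t : Blk) (Q : β → ℂ) (g : β → Blk → ℂ) :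
    ∑ x : Blk, ∑ r : β, (wgt t x * Q r) *
        (if x = Blk.O then g r Blk.L + g r Blk.R else g r Blk.O)
      = sq2 * (nu t : ℂ) * ∑ x : Blk, ∑ r : β, (wgt t x * Q r) * g r x := by
  have swap : ∀ A : β → Blk → ℂ,
      ∑ x : Blk, ∑ r : β, (wgt t x * Q r) * A r x
        = ∑ r : β, Q r * ∑ x : Blk, wgt t x * A r x := by
    intro A
    rw [Finset.sum_comm]
    refine Finset.sum_congr rfl fun r _ => ?_
    rw [Finset.mul_sum]
    exact Finset.sum_congr rfl fun x _ => by ring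
  rw [swap (fun r x => if x = Blk.O then g r Blk.L + g r Blk.R else g r Blk.O),
    swap (fun r x => g r x), Finset.mul_sum]
  refine Finset.sum_congr rfl fun r _ => ?_
  rw [eig t (g r)]
  ring

lemma splitAt_apply_ne {N : ℕ} (j : Fin N) (x : Blk)
    (r : {k : Fin N // k ≠ j} → Blk) (k : {k : Fin N // k ≠ j}) :
    (Equiv.funSplitAt j Blk).symm (x, r) (k : Fin N) = r k := by
  simp [Equiv.funSplitAt, Equiv.piSplitAt, k.2]

lemma splitAt_apply_self {N : ℕ} (j : Fin N) (x : Blk)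
    (r : {k : Fin N // k ≠ j} → Blk) :
    (Equiv.funSplitAt j Blk).symm (x, r) j = x := by
  simp [Equiv.funSplitAt, Equiv.piSplitAt]

lemma splitAt_update {N : ℕ} (j : Fin N) (x y : Blk)
    (r : {k : Fin N // k ≠ j} → Blk) :
    Function.update ((Equiv.funSplitAt j Blk).symm (x, r)) j y
      = (Equiv.funSplitAt j Blk).symm (y, r) := by
  funext k
  rcases eq_or_ne k j with rfl | hk
  · rw [Function.update_self, splitAt_apply_self]
  · rw [Function.update_of_ne hk, splitAt_apply_ne j x r ⟨k, hk⟩,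
      splitAt_apply_ne j y r ⟨k, hk⟩]

lemma prod_split {N : ℕ} (j : Fin N) (g : Fin N → ℂ) :
    ∏ k, g k = g j * ∏ k : {k : Fin N // k ≠ j}, g (k : Fin N) := by
  rw [Fintype.prod_eq_mul_prod_compl j]
  congr 1
  exact Finset.prod_subtype _ (fun k => by simp) _

lemma Ft_H1 {N : ℕ} (ψ : (Fin N → Blk) → ℂ) (τ : Fin N → Blk) :
    Ft (H1 ψ) τ = sq2 * (((∑ j, nu (τ j)) : ℤ) : ℂ) * Ft ψ τ := by
  have key : ∀ j : Fin N,
      (∑ c : Fin N → Blk, (∏ k, wgt (τ k) (c k)) *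
        (if c j = Blk.O then ψ (Function.update c j Blk.L) + ψ (Function.update c j Blk.R)
         else ψ (Function.update c j Blk.O)))
      = sq2 * (nu (τ j) : ℂ) * Ft ψ τ := by
    intro j
    have reindex : ∀ f : (Fin N → Blk) → ℂ,
        ∑ c : Fin N → Blk, f c
          = ∑ x : Blk, ∑ r : {k : Fin N // k ≠ j} → Blk,
              f ((Equiv.funSplitAt j Blk).symm (x, r)) := by
      intro f
      rw [← Equiv.sum_comp (Equiv.funSplitAt j Blk).symm f, Fintype.sum_prod_type]
    have form : ∀ (x : Blk) (r : {k : Fin N // k ≠ j} → Blk),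
        (∏ k, wgt (τ k) ((Equiv.funSplitAt j Blk).symm (x, r) k))
          = wgt (τ j) x * ∏ k : {k : Fin N // k ≠ j}, wgt (τ (k : Fin N)) (r k) := by
      intro x r
      rw [prod_split j, splitAt_apply_self]
      congr 1
      exact Finset.prod_congr rfl fun k _ => by rw [splitAt_apply_ne]
    rw [reindex]
    have step : ∀ (x : Blk) (r : {k : Fin N // k ≠ j} → Blk),
        (∏ k, wgt (τ k) ((Equiv.funSplitAt j Blk).symm (x, r) k)) *
          (if (Equiv.funSplitAt j Blk).symm (x, r) j = Blk.O then
            ψ (Function.update ((Equiv.funSplitAt j Blk).symm (x, r)) j Blk.L)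
              + ψ (Function.update ((Equiv.funSplitAt j Blk).symm (x, r)) j Blk.R)
           else ψ (Function.update ((Equiv.funSplitAt j Blk).symm (x, r)) j Blk.O))
        = (wgt (τ j) x * ∏ k : {k : Fin N // k ≠ j}, wgt (τ (k : Fin N)) (r k)) *
            (if x = Blk.O then
              ψ ((Equiv.funSplitAt j Blk).symm (Blk.L, r))
                + ψ ((Equiv.funSplitAt j Blk).symm (Blk.R, r))
             else ψ ((Equiv.funSplitAt j Blk).symm (Blk.O, r))) := by
      intro x r
      rw [form, splitAt_apply_self, splitAt_update, splitAt_update, splitAt_update]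
    simp only [step]
    rw [helper (τ j) (fun r => ∏ k : {k : Fin N // k ≠ j}, wgt (τ (k : Fin N)) (r k))
      (fun r y => ψ ((Equiv.funSplitAt j Blk).symm (y, r)))]
    congr 1
    rw [Ft, reindex (fun c => (∏ k, wgt (τ k) (c k)) * ψ c)]
    exact Finset.sum_congr rfl fun x _ => Finset.sum_congr rfl fun r _ => by rw [form]
  have expand : Ft (H1 ψ) τ
      = ∑ j : Fin N, ∑ c : Fin N → Blk, (∏ k, wgt (τ k) (c k)) *
          (if c j = Blk.O then ψ (Function.update c j Blk.L) + ψ (Function.update c j Blk.R)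
           else ψ (Function.update c j Blk.O)) := by
    unfold Ft H1
    simp only [Finset.mul_sum]
    exact Finset.sum_comm
  rw [expand, Finset.sum_congr rfl (fun j _ => key j), ← Finset.sum_mul, ← Finset.mul_sum]
  push_cast
  ring

lemma neg_one_zpow_even (a b : ℤ) (h : Even (a - b)) : (-1:ℂ)^a = (-1:ℂ)^b := by
  obtain ⟨k, hk⟩ := h
  have ha : a = b + 2*k := by omega
  rw [ha, zpow_add₀ (by norm_num : (-1:ℂ) ≠ 0), zpow_mul]
  norm_num

lemma parity {N : ℕ} (τ : Fin N → Blk) :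
    Even ((((N : ℤ) + ∑ j, nu (τ j))) - ((∑ j, zet (τ j) : ℕ) : ℤ)) := by
  have h1 : ((∑ j, zet (τ j) : ℕ) : ℤ) = ∑ j, ((zet (τ j) : ℤ)) := by push_cast; rfl
  have h2 : ∀ t : Blk, (zet t : ℤ) = 1 - nu t * nu t := by intro t; cases t <;> rfl
  have key : (((N:ℤ) + ∑ j, nu (τ j))) - ∑ j, ((zet (τ j) : ℤ))
      = ∑ j, (nu (τ j) + nu (τ j) * nu (τ j)) := by
    simp only [h2]
    rw [Finset.sum_sub_distrib, Finset.sum_add_distrib, Finset.sum_const,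
      Finset.card_univ, Fintype.card_fin]
    push_cast
    ring
  rw [h1, key]
  apply Finset.even_sum
  intro j _
  have h3 := Int.even_mul_succ_self (nu (τ j))
  convert h3 using 1
  · rfl
  ring

/-- Proposition 2: a nonzero eigenstate of `H1` with eigenvalue
`√2·n` is an eigenstate of the `L ↔ R` exchange operator `U` with eigenvalue
`(−1)^{L_b + n}`. -/
theorem H1_eigenstate_is_U_eigenstate
    (Lb : ℕ) (hLb : 1 ≤ Lb)
    (ψ : (Fin Lb → Blk) → ℂ) (hψ : ψ ≠ 0) (n : ℤ)
    (hH1 : ∀ c, H1 ψ c = (Real.sqrt 2 : ℂ) * (n : ℂ) * ψ c) :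
    ∀ c : Fin Lb → Blk, ψ (Blk.sigma ∘ c) = (-1 : ℂ) ^ ((Lb : ℤ) + n) * ψ c := by
  intro c
  set E : ℂ := (-1:ℂ)^((Lb:ℤ)+n) with hE
  have hsq2 : sq2 ≠ 0 := by
    intro h
    have := sq2_mul
    rw [h] at this
    simp at this
  have keyτ : ∀ τ : Fin Lb → Blk,
      (-1:ℂ)^(∑ j, zet (τ j)) * Ft ψ τ = E * Ft ψ τ := by
    intro τ
    by_cases h0 : Ft ψ τ = 0
    · rw [h0, mul_zero, mul_zero]
    · have h1 : sq2 * (((∑ j, nu (τ j)) : ℤ):ℂ) * Ft ψ τ = sq2 * (n:ℂ) * Ft ψ τ := by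
        rw [← Ft_H1]
        unfold Ft
        rw [Finset.mul_sum]
        refine Finset.sum_congr rfl fun c' _ => ?_
        rw [hH1 c']
        show _ * ((sq2 : ℂ) * (n : ℂ) * ψ c') = _
        ring
      have hn : (((∑ j, nu (τ j)) : ℤ):ℂ) = (n:ℂ) :=
        mul_left_cancel₀ hsq2 (mul_right_cancel₀ h0 h1)
      have hn' : (∑ j, nu (τ j)) = n := by exact_mod_cast hn
      have hev := parity τ
      rw [hn'] at hev
      have hpow : (-1:ℂ)^(((Lb:ℤ)+n)) = (-1:ℂ)^(((∑ j, zet (τ j) : ℕ)) : ℤ) :=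
        neg_one_zpow_even _ _ hev
      rw [zpow_natCast] at hpow
      rw [hE, ← hpow]
  calc ψ (Blk.sigma ∘ c)
      = ∑ τ : Fin Lb → Blk, (∏ j, reci (τ j) * wgt (τ j) (c j)) *
          Ft (fun c' => ψ (Blk.sigma ∘ c')) τ :=
        (Ft_inv (fun c' => ψ (Blk.sigma ∘ c')) c).symm
    _ = ∑ τ : Fin Lb → Blk, (∏ j, reci (τ j) * wgt (τ j) (c j)) *
          ((-1:ℂ)^(∑ j, zet (τ j)) * Ft ψ τ) := by
        refine Finset.sum_congr rfl fun τ _ => ?_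
        rw [Ft_sigma]
    _ = ∑ τ : Fin Lb → Blk, (∏ j, reci (τ j) * wgt (τ j) (c j)) * (E * Ft ψ τ) := by
        refine Finset.sum_congr rfl fun τ _ => ?_
        rw [keyτ]
    _ = E * ∑ τ : Fin Lb → Blk, (∏ j, reci (τ j) * wgt (τ j) (c j)) * Ft ψ τ := by
        rw [Finset.mul_sum]
        exact Finset.sum_congr rfl fun τ _ => by ring
    _ = E * ψ c := by rw [Ft_inv]
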